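/- Let T : [0,∞) → [1,∞) be an increasing surjective function extending tetration of 2 (i.e., T(n) = ⁿ2 for every natural number n), and let slog : [1,∞) → [0,∞) be its inverse. Then for every natural number n ≥ 2, log*(ⁿ2) − log⊛(ⁿ2) ≥ slog(2n/3). -/

import Mathlib

noncomputable def lg (x : ℝ) : ℝ := Real.logb 2 (max 1 x)

noncomputable def logStar (α : ℝ) : ℕ := sInf {k : ℕ | lg^[k] α ≤ 1}

noncomputable def logCirc (α : ℝ) : ℕ := sSup {k : ℕ | (k : ℝ) ≤ lg^[k] α}

/-- Tetration of 2: `⁰2 = 1`, `ⁿ⁺¹2 = 2^(ⁿ2)`. -/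
def tet : ℕ → ℕ
  | 0 => 1
  | n + 1 => 2 ^ tet n

lemma tet_ge (m : ℕ) : m + 1 ≤ tet m := by
  induction m with
  | zero => simp [tet]
  | succ m ih =>
    have h := Nat.lt_two_pow_self (n := tet m)
    show m + 2 ≤ 2 ^ tet m
    omega

lemma tet_one_le (m : ℕ) : 1 ≤ tet m := by have := tet_ge m; omega

lemma two_mul_le_tet (m : ℕ) : 2 * m ≤ tet m := by
  cases m with
  | zero => simp [tet]
  | succ m =>
    have h1 : m + 1 ≤ tet m := tet_ge m
    have h2 : m < 2 ^ m := Nat.lt_two_pow_self (n := m)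
    have h3 : 2 ^ (m + 1) ≤ 2 ^ tet m := Nat.pow_le_pow_right (by norm_num) h1
    have h4 : 2 ^ (m + 1) = 2 ^ m * 2 := pow_succ 2 m
    show 2 * (m + 1) ≤ 2 ^ tet m
    omega

lemma lg_tet (m : ℕ) : lg ((tet (m + 1) : ℕ) : ℝ) = ((tet m : ℕ) : ℝ) := by
  have h : ((tet (m + 1) : ℕ) : ℝ) = (2 : ℝ) ^ tet m := by
    show (((2 ^ tet m : ℕ) : ℝ)) = _
    push_cast
    ring
  have h1 : (1 : ℝ) ≤ (2 : ℝ) ^ tet m := one_le_pow₀ (by norm_num : (1:ℝ) ≤ 2)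
  rw [lg, h, max_eq_right h1, Real.logb_pow,
    Real.logb_self_eq_one (by norm_num : (1:ℝ) < 2), mul_one]

lemma iter_lg_tet : ∀ k n : ℕ, k ≤ n → lg^[k] ((tet n : ℕ) : ℝ) = ((tet (n - k) : ℕ) : ℝ)
  | 0, n, _ => by simp
  | k + 1, 0, h => by omega
  | k + 1, m + 1, h => by
    rw [Function.iterate_succ_apply, lg_tet, iter_lg_tet k m (by omega)]
    rw [Nat.succ_sub_succ]

lemma iter_lg_tet_gt (n k : ℕ) (h : n < k) : lg^[k] ((tet n : ℕ) : ℝ) = 0 := by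
  induction k with
  | zero => omega
  | succ k ih =>
    rcases Nat.lt_or_ge n k with h' | h'
    · rw [Function.iterate_succ_apply', ih h']
      simp [lg]
    · have hnk : n = k := by omega
      subst hnk
      rw [Function.iterate_succ_apply', iter_lg_tet n n le_rfl]
      norm_num [tet, lg]

lemma logStar_tet (n : ℕ) : logStar ((tet n : ℕ) : ℝ) = n := by
  unfold logStar
  have hmem : n ∈ {k : ℕ | lg^[k] ((tet n : ℕ) : ℝ) ≤ 1} := by
    simp only [Set.mem_setOf_eq, iter_lg_tet n n le_rfl]
    norm_num [tet]
  refine le_antisymm (Nat.sInf_le hmem) ?_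
  by_contra hlt
  push_neg at hlt
  have hsmem := Nat.sInf_mem (⟨n, hmem⟩ : Set.Nonempty _)
  set k := sInf {k : ℕ | lg^[k] ((tet n : ℕ) : ℝ) ≤ 1} with hk
  have h1 : lg^[k] ((tet n : ℕ) : ℝ) ≤ 1 := hsmem
  rw [iter_lg_tet k n (by omega)] at h1
  have h2 : 2 ≤ tet (n - k) := by have := tet_ge (n - k); omega
  have : (2 : ℝ) ≤ ((tet (n - k) : ℕ) : ℝ) := by exact_mod_cast h2
  linarith

lemma logCirc_tet (n : ℕ) (hn : 2 ≤ n) (j : ℕ) (hj : n ≤ tet j + j)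
    (hjmin : ∀ i < j, tet i + i < n) : logCirc ((tet n : ℕ) : ℝ) = n - j := by
  have hjn : j ≤ n := by
    by_contra h
    push_neg at h
    have := hjmin n h
    have := tet_one_le n
    omega
  have hub : ∀ k ∈ {k : ℕ | (k : ℝ) ≤ lg^[k] ((tet n : ℕ) : ℝ)}, k ≤ n - j := by
    intro k hk
    simp only [Set.mem_setOf_eq] at hk
    have hkn : k ≤ n := by
      by_contra h
      push_neg at h
      rw [iter_lg_tet_gt n k h] at hk
      have : (1 : ℝ) ≤ (k : ℝ) := by exact_mod_cast (by omega : 1 ≤ k)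
      linarith
    rw [iter_lg_tet k n hkn] at hk
    have hk' : k ≤ tet (n - k) := by exact_mod_cast hk
    have : j ≤ n - k := by
      by_contra h
      push_neg at h
      have := hjmin (n - k) h
      omega
    omega
  have hmem : (n - j : ℕ) ∈ {k : ℕ | (k : ℝ) ≤ lg^[k] ((tet n : ℕ) : ℝ)} := by
    simp only [Set.mem_setOf_eq]
    rw [iter_lg_tet (n - j) n (by omega)]
    have h1 : n - (n - j) = j := by omega
    rw [h1]
    exact_mod_cast (by omega : n - j ≤ tet j)
  refine le_antisymm (csSup_le ⟨_, hmem⟩ hub) (le_csSup ⟨n - j, hub⟩ hmem)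

theorem stmt1 (T slog : ℝ → ℝ)
    (hT_mono : StrictMonoOn T (Set.Ici (0 : ℝ)))
    (hT_mem : ∀ x ∈ Set.Ici (0 : ℝ), T x ∈ Set.Ici (1 : ℝ))
    (hT_surj : ∀ y ∈ Set.Ici (1 : ℝ), ∃ x ∈ Set.Ici (0 : ℝ), T x = y)
    (hT_tet : ∀ n : ℕ, T n = tet n)
    (hslog_left : ∀ x ∈ Set.Ici (0 : ℝ), slog (T x) = x)
    (hslog_right : ∀ y ∈ Set.Ici (1 : ℝ), T (slog y) = y)
    (n : ℕ) (hn : 2 ≤ n) :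
    slog (2 * n / 3) ≤ (logStar (tet n) : ℝ) - (logCirc (tet n) : ℝ) := by
  have hex : ∃ j, n ≤ tet j + j := ⟨n, by have := tet_one_le n; omega⟩
  set j := Nat.find hex with hjdef
  have hj : n ≤ tet j + j := Nat.find_spec hex
  have hjmin : ∀ i < j, tet i + i < n := fun i hi => by
    have := Nat.find_min hex hi; omega
  have hjn : j ≤ n := by
    by_contra h
    push_neg at h
    have := hjmin n h
    have := tet_one_le n
    omega
  rw [logStar_tet n, logCirc_tet n hn j hj hjmin]
  have hcast : (n : ℝ) - ((n - j : ℕ) : ℝ) = (j : ℝ) := by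
    rw [Nat.cast_sub hjn]; ring
  rw [hcast]
  -- key inequality
  have h2j : 2 * j ≤ tet j := two_mul_le_tet j
  have hnat : 2 * n ≤ 3 * tet j := by omega
  have hkey : 2 * (n : ℝ) / 3 ≤ ((tet j : ℕ) : ℝ) := by
    rw [div_le_iff₀ (by norm_num : (0:ℝ) < 3)]
    have h' : (2:ℝ) * n ≤ 3 * (tet j : ℝ) := by exact_mod_cast hnat
    linarith
  have h1 : (1 : ℝ) ≤ 2 * (n : ℝ) / 3 := by
    have : (2 : ℝ) ≤ (n : ℝ) := by exact_mod_cast hn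
    linarith [this]
  obtain ⟨x, hx, hTx⟩ := hT_surj _ (Set.mem_Ici.mpr h1)
  have hsx : slog (2 * (n : ℝ) / 3) = x := by rw [← hTx, hslog_left x hx]
  have hjmem : ((j : ℕ) : ℝ) ∈ Set.Ici (0 : ℝ) := Set.mem_Ici.mpr (by positivity)
  have hle : T x ≤ T (j : ℝ) := by
    rw [hTx, hT_tet j]; exact hkey
  have hxj : x ≤ (j : ℝ) := by
    by_contra h
    push_neg at h
    exact absurd (hT_mono hjmem hx h) (not_lt.mpr hle)
  rw [hsx]
  exact hxj
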